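/- Every Polish diversity (𝕌, δ_𝕌) with the extension property is ultrahomogeneous: for any finite subsets A, A' ⊆ 𝕌 and any bijection φ : A → A' with δ_𝕌(φ(B)) = δ_𝕌(B) for all B ⊆ A, there is a bijection Φ : 𝕌 → 𝕌 with δ_𝕌(Φ(C)) = δ_𝕌(C) for all finite C ⊆ 𝕌 that extends φ. -/

import Mathlib

open scoped Classical

/-- A diversity on `X`: a real-valued function on finite subsets satisfying
(D1) nonnegativity with `δ A = 0 ↔ |A| ≤ 1`, and (D2) the triangle inequality. -/
structure Diversity (X : Type*) where
  δ : Finset X → ℝ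
  nonneg : ∀ A : Finset X, 0 ≤ δ A
  eq_zero_iff : ∀ A : Finset X, δ A = 0 ↔ A.card ≤ 1
  triangle : ∀ A B C : Finset X, B.Nonempty → δ (A ∪ C) ≤ δ (A ∪ B) + δ (B ∪ C)

/-- An admissible function on a diversity (a one-point extension). -/
structure IsAdmissible {X : Type*} (D : Diversity X) (f : Finset X → ℝ) : Prop where
  empty : f ∅ = 0
  le : ∀ A : Finset X, D.δ A ≤ f A
  tri : ∀ A B C : Finset X, C.Nonempty → f (A ∪ B) ≤ f (A ∪ C) + D.δ (B ∪ C)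
  subadd : ∀ A B : Finset X, f (A ∪ B) ≤ f A + f B

/-- Restriction of a diversity to a subset. -/
noncomputable def Diversity.restrict {X : Type*} (D : Diversity X) (S : Set X) : Diversity S where
  δ A := D.δ (A.image Subtype.val)
  nonneg A := D.nonneg _
  eq_zero_iff A := by
    rw [D.eq_zero_iff, Finset.card_image_of_injective _ Subtype.val_injective]
  triangle A B C hB := by
    have h := D.triangle (A.image Subtype.val) (B.image Subtype.val) (C.image Subtype.val)
      (hB.image _)
    simpa [Finset.image_union] using h

/-- Separability of the induced metric `d a b = δ {a, b}`. -/
def Diversity.SeparableD {X : Type*} (D : Diversity X) : Prop :=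
  ∃ s : Set X, s.Countable ∧ ∀ x : X, ∀ ε : ℝ, 0 < ε → ∃ y ∈ s, D.δ {x, y} < ε

/-- Completeness of the induced metric `d a b = δ {a, b}`. -/
def Diversity.CompleteD {X : Type*} (D : Diversity X) : Prop :=
  ∀ u : ℕ → X, (∀ ε : ℝ, 0 < ε → ∃ N : ℕ, ∀ m ≥ N, ∀ n ≥ N, D.δ {u m, u n} < ε) →
    ∃ x : X, ∀ ε : ℝ, 0 < ε → ∃ N : ℕ, ∀ n ≥ N, D.δ {u n, x} < ε

/-- The diversity `δ̂` on (finite sets of) admissible functions. -/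
noncomputable def hatδ {X : Type*} (F : Finset (Finset X → ℝ)) : ℝ :=
  if F.card ≤ 1 then 0
  else sSup { r : ℝ | ∃ j ∈ F, ∃ A : (Finset X → ℝ) → Finset X,
    r = j ((F.erase j).biUnion A) - ∑ i ∈ F.erase j, i (A i) }

/-- The canonical maximal extension `f_S^X` of an admissible function on `S ⊆ X`. -/
noncomputable def extFun {X : Type*} (D : Diversity X) (S : Set X) (f : Finset S → ℝ)
    (A : Finset X) : ℝ :=
  sInf { r : ℝ | ∃ (B : Finset S) (As : S → Finset X),
    B.biUnion As = A ∧ r = f B + ∑ b ∈ B, D.δ (insert (b : X) (As b)) }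

/-- An admissible function is finitely supported if it is the canonical extension
of an admissible function on some finite nonempty `S ⊆ X`. -/
def FinitelySupported {X : Type*} (D : Diversity X) (f : Finset X → ℝ) : Prop :=
  ∃ S : Set X, S.Finite ∧ S.Nonempty ∧ ∃ g : Finset S → ℝ,
    IsAdmissible (D.restrict S) g ∧ f = extFun D S g

/-- The extension property for a diversity. -/
def Diversity.ExtensionProp {X : Type*} (D : Diversity X) : Prop :=
  ∀ F : Finset X, ∀ f : Finset ((F : Set X)) → ℝ,
    IsAdmissible (D.restrict (F : Set X)) f →
    ∃ x : X, ∀ A : Finset ((F : Set X)), D.δ (insert x (A.image Subtype.val)) = f A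

/-- The approximate extension property for a diversity. -/
def Diversity.ApproxExtensionProp {X : Type*} (D : Diversity X) : Prop :=
  ∀ F : Finset X, ∀ f : Finset ((F : Set X)) → ℝ,
    IsAdmissible (D.restrict (F : Set X)) f →
    ∀ ε : ℝ, 0 < ε →
      ∃ x : X, ∀ A : Finset ((F : Set X)), |D.δ (insert x (A.image Subtype.val)) - f A| ≤ ε

/-- Ultrahomogeneity: isomorphisms between finite subsets extend to automorphisms. -/
def Diversity.Ultrahomogeneous {X : Type*} (D : Diversity X) : Prop :=
  ∀ (A A' : Finset X) (φ : ((A : Set X)) → ((A' : Set X))), Function.Bijective φ →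
    (∀ B : Finset ((A : Set X)),
      D.δ (B.image (fun b => (φ b : X))) = D.δ (B.image Subtype.val)) →
    ∃ Φ : X → X, Function.Bijective Φ ∧ (∀ C : Finset X, D.δ (C.image Φ) = D.δ C) ∧
      ∀ a : ((A : Set X)), Φ a = (φ a : X)
namespace Stmt16Aux
variable {U : Type*} (DU : Diversity U)

lemma delta_single (x : U) : DU.δ {x} = 0 :=
  (DU.eq_zero_iff {x}).mpr (by simp)

lemma d_comm (x y : U) : DU.δ {x, y} = DU.δ {y, x} := by rw [Finset.pair_comm]

lemma d_eq_of_zero {x y : U} (h : DU.δ {x, y} = 0) : x = y := by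
  have := (DU.eq_zero_iff {x, y}).mp h
  exact Finset.card_le_one.mp this x (by simp) y (by simp)

lemma d_triangle (x y z : U) : DU.δ {x, z} ≤ DU.δ {x, y} + DU.δ {y, z} := by
  have h := DU.triangle {x} {y} {z} (by simp)
  simpa using h

lemma insert_le (s : Finset U) (b : U) : DU.δ s ≤ DU.δ (insert b s) := by
  have h := DU.triangle s {b} ∅ (by simp)
  simp only [Finset.union_empty] at h
  calc DU.δ s ≤ DU.δ (s ∪ {b}) + DU.δ {b} := h
    _ = DU.δ (insert b s) := by rw [delta_single, add_zero, Finset.union_comm]; rfl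

lemma union_le (s r : Finset U) : DU.δ s ≤ DU.δ (s ∪ r) := by
  classical
  induction r using Finset.induction with
  | empty => simp
  | insert b r hb ih =>
    calc DU.δ s ≤ DU.δ (s ∪ r) := ih
      _ ≤ DU.δ (insert b (s ∪ r)) := insert_le DU _ _
      _ = DU.δ (s ∪ insert b r) := by rw [Finset.union_insert]

lemma mono {s t : Finset U} (h : s ⊆ t) : DU.δ s ≤ DU.δ t := by
  have := union_le DU s t
  rwa [Finset.union_eq_right.mpr h] at this

lemma swap_point (s : Finset U) (x y : U) :
    DU.δ (insert x s) ≤ DU.δ (insert y s) + DU.δ {y, x} := by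
  have h := DU.triangle s {y} {x} (by simp)
  simp only [Finset.union_comm s {y}, Finset.union_comm s {x}] at h
  simpa [← Finset.insert_eq] using h

lemma lip {α : Type*} (C : Finset α) (g h : α → U) (T : Finset U) :
    DU.δ (T ∪ C.image g) ≤ DU.δ (T ∪ C.image h) + ∑ c ∈ C, DU.δ {h c, g c} := by
  classical
  induction C using Finset.induction generalizing T with
  | empty => simp
  | insert a s ha ih =>
    rw [Finset.image_insert, Finset.image_insert, Finset.sum_insert ha,
      Finset.union_insert, Finset.union_insert]
    calc DU.δ (insert (g a) (T ∪ s.image g))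
        ≤ DU.δ (insert (h a) (T ∪ s.image g)) + DU.δ {h a, g a} := swap_point DU _ _ _
      _ = DU.δ ((insert (h a) T) ∪ s.image g) + DU.δ {h a, g a} := by
          rw [Finset.insert_union]
      _ ≤ (DU.δ ((insert (h a) T) ∪ s.image h) + ∑ c ∈ s, DU.δ {h c, g c}) + DU.δ {h a, g a} := by
          exact add_le_add (ih (insert (h a) T)) le_rfl
      _ = DU.δ (insert (h a) (T ∪ s.image h)) + (DU.δ {h a, g a} + ∑ c ∈ s, DU.δ {h c, g c}) := by
          rw [Finset.insert_union]; ring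

lemma lip' {α : Type*} (C : Finset α) (g h : α → U) :
    |DU.δ (C.image g) - DU.δ (C.image h)| ≤ ∑ c ∈ C, DU.δ {g c, h c} := by
  rw [abs_sub_le_iff]
  constructor
  · have := lip DU C g h ∅
    simp only [Finset.empty_union] at this
    calc DU.δ (C.image g) - DU.δ (C.image h) ≤ ∑ c ∈ C, DU.δ {h c, g c} := by linarith
      _ = ∑ c ∈ C, DU.δ {g c, h c} := Finset.sum_congr rfl fun c _ => d_comm DU _ _
  · have := lip DU C h g ∅
    simp only [Finset.empty_union] at this
    linarith

/-- A finite partial diversity-isomorphism, as a set of pairs. -/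
def IsPIso (P : Finset (U × U)) : Prop :=
  ∀ S ⊆ P, DU.δ (S.image Prod.fst) = DU.δ (S.image Prod.snd)

lemma pIso_swap {P : Finset (U × U)} (hP : IsPIso DU P) : IsPIso DU (P.image Prod.swap) := by
  intro S hS
  have hS0 : S.image Prod.swap ⊆ P := by
    intro p hp
    rw [Finset.mem_image] at hp
    obtain ⟨q, hq, rfl⟩ := hp
    obtain ⟨r, hr, rfl⟩ := Finset.mem_image.mp (hS hq)
    simpa using hr
  have h := hP _ hS0
  rw [Finset.image_image, Finset.image_image] at h
  have e1 : (Prod.fst ∘ Prod.swap : U × U → U) = Prod.snd := rfl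
  have e2 : (Prod.snd ∘ Prod.swap : U × U → U) = Prod.fst := rfl
  rw [e1, e2] at h
  exact h.symm

lemma pIso_snd_inj {P : Finset (U × U)} (hP : IsPIso DU P) {p q : U × U}
    (hp : p ∈ P) (hq : q ∈ P) (h : p.2 = q.2) : p = q := by
  have hsub : ({p, q} : Finset (U × U)) ⊆ P := by
    intro r hr; rcases Finset.mem_insert.mp hr with rfl | hr
    · exact hp
    · rwa [Finset.mem_singleton.mp hr]
  have := hP {p, q} hsub
  rw [Finset.image_insert, Finset.image_singleton, Finset.image_insert,
    Finset.image_singleton, h] at this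
  have hz : DU.δ {p.1, q.1} = 0 := by
    rw [this]; simpa using delta_single DU q.2
  have := d_eq_of_zero DU hz
  exact Prod.ext this h

lemma graph_pIso (D : Finset U) (h : U → U)
    (hh : ∀ B : Finset U, B ⊆ D → DU.δ (B.image h) = DU.δ B) :
    IsPIso DU (D.image (fun a => (a, h a))) := by
  intro S hS
  have hmem : ∀ p ∈ S, p.1 ∈ D ∧ p.2 = h p.1 := by
    intro p hp
    obtain ⟨a, ha, rfl⟩ := Finset.mem_image.mp (hS hp)
    exact ⟨ha, rfl⟩
  have h1 : S.image Prod.snd = (S.image Prod.fst).image h := by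
    rw [Finset.image_image]
    exact Finset.image_congr fun p hp => (hmem p hp).2
  have hsub : S.image Prod.fst ⊆ D := by
    intro w hw
    obtain ⟨p, hp, rfl⟩ := Finset.mem_image.mp hw
    exact (hmem p hp).1
  rw [h1, hh _ hsub]

/-- The key one-point extension lemma. -/
lemma extend (he : DU.ExtensionProp) {P : Finset (U × U)} (hP : IsPIso DU P) (x : U) :
    ∃ y, IsPIso DU (insert (x, y) P) := by
  classical
  set R : Finset U := P.image Prod.snd with hR
  -- pullback of a set of second coordinates
  set pre : Finset U → Finset U := fun B => (P.filter (fun p => p.2 ∈ B)).image Prod.fst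
    with hpre
  have pre_union : ∀ B C : Finset U, pre (B ∪ C) = pre B ∪ pre C := by
    intro B C
    simp only [hpre]
    rw [← Finset.image_union, ← Finset.filter_or]
    congr 1
    apply Finset.filter_congr
    intro p _
    simp [Finset.mem_union]
  have pre_empty : pre ∅ = ∅ := by simp [hpre]
  have snd_filter : ∀ B : Finset U, B ⊆ R → (P.filter (fun p => p.2 ∈ B)).image Prod.snd = B := by
    intro B hB
    apply Finset.ext
    intro b
    simp only [Finset.mem_image, Finset.mem_filter]
    constructor
    · rintro ⟨p, ⟨_, hpb⟩, rfl⟩; exact hpb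
    · intro hb
      obtain ⟨p, hp, rfl⟩ := Finset.mem_image.mp (hB hb)
      exact ⟨p, ⟨hp, hb⟩, rfl⟩
  have pre_delta : ∀ B : Finset U, B ⊆ R → DU.δ (pre B) = DU.δ B := by
    intro B hB
    have := hP (P.filter (fun p => p.2 ∈ B)) (Finset.filter_subset _ _)
    rw [snd_filter B hB] at this
    exact this
  have pre_nonempty : ∀ B : Finset U, B ⊆ R → B.Nonempty → (pre B).Nonempty := by
    intro B hB ⟨b, hb⟩
    obtain ⟨p, hp, rfl⟩ := Finset.mem_image.mp (hB hb)
    exact ⟨p.1, Finset.mem_image.mpr ⟨p, Finset.mem_filter.mpr ⟨hp, hb⟩, rfl⟩⟩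
  have img_sub : ∀ B' : Finset ((R : Set U)), B'.image Subtype.val ⊆ R := by
    intro B' b hb
    obtain ⟨a, _, rfl⟩ := Finset.mem_image.mp hb
    exact Finset.mem_coe.mp a.2
  set f : Finset ((R : Set U)) → ℝ := fun B' => DU.δ (insert x (pre (B'.image Subtype.val)))
    with hf
  have hres : ∀ T : Finset ((R : Set U)), (DU.restrict (R : Set U)).δ T
      = DU.δ (T.image Subtype.val) := fun T => rfl
  have hadm : IsAdmissible (DU.restrict (R : Set U)) f := by
    constructor
    · simp [hf, pre_empty, delta_single]
    · intro A'
      rw [hres]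
      calc DU.δ (A'.image Subtype.val) = DU.δ (pre (A'.image Subtype.val)) :=
            (pre_delta _ (img_sub A')).symm
        _ ≤ f A' := mono DU (Finset.subset_insert _ _)
    · intro A' B' C' hC'
      simp only [hf, Finset.image_union, pre_union]
      set a := pre (A'.image Subtype.val)
      set b := pre (B'.image Subtype.val)
      set c := pre (C'.image Subtype.val)
      have hcne : c.Nonempty := pre_nonempty _ (img_sub C') (hC'.image _)
      have htri := DU.triangle (insert x a) c b hcne
      have e1 : insert x a ∪ b = insert x (a ∪ b) := by rw [Finset.insert_union]
      have e2 : insert x a ∪ c = insert x (a ∪ c) := by rw [Finset.insert_union]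
      rw [e1, e2] at htri
      have e3 : DU.δ (c ∪ b) = DU.δ (B'.image Subtype.val ∪ C'.image Subtype.val) := by
        rw [Finset.union_comm c b, ← pre_union]
        exact pre_delta _ (Finset.union_subset (img_sub B') (img_sub C'))
      rw [hres]
      refine le_trans htri (add_le_add le_rfl (le_of_eq ?_))
      rw [e3]
      congr 1
      ext u
      simp only [Finset.mem_union, Finset.mem_image]
      constructor
      · rintro (⟨w, hw, rfl⟩ | ⟨w, hw, rfl⟩)
        · exact ⟨w, Or.inl hw, rfl⟩
        · exact ⟨w, Or.inr hw, rfl⟩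
      · rintro ⟨w, hw | hw, rfl⟩
        · exact Or.inl ⟨w, hw, rfl⟩
        · exact Or.inr ⟨w, hw, rfl⟩
    · intro A' B'
      simp only [hf, Finset.image_union, pre_union]
      set a := pre (A'.image Subtype.val)
      set b := pre (B'.image Subtype.val)
      have htri := DU.triangle (insert x a) ({x} : Finset U) b (by simp)
      have e1 : insert x a ∪ b = insert x (a ∪ b) := by rw [Finset.insert_union]
      have e2 : insert x a ∪ {x} = insert x a := by
        rw [Finset.union_comm, ← Finset.insert_eq, Finset.insert_idem]
      have e3 : ({x} : Finset U) ∪ b = insert x b := by rw [← Finset.insert_eq]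
      rw [e1, e2, e3] at htri
      exact htri
  obtain ⟨y, hy⟩ := he R f hadm
  refine ⟨y, ?_⟩
  intro S hS
  by_cases hxy : (x, y) ∈ S
  · set S₀ := S.erase (x, y) with hS₀def
    have hS₀P : S₀ ⊆ P := by
      intro p hp
      have := hS (Finset.mem_of_mem_erase hp)
      rcases Finset.mem_insert.mp this with rfl | h
      · exact absurd rfl (Finset.ne_of_mem_erase hp)
      · exact h
    have hSeq : S = insert (x, y) S₀ := (Finset.insert_erase hxy).symm
    rw [hSeq, Finset.image_insert, Finset.image_insert]
    -- B := snds of S₀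
    set B : Finset U := S₀.image Prod.snd with hB
    have hBR : B ⊆ R := Finset.image_subset_image hS₀P
    set B' : Finset ((R : Set U)) := B.subtype (fun u => u ∈ (R : Set U)) with hB'
    have himg : B'.image Subtype.val = B := by
      apply Finset.ext
      intro u
      simp only [hB', Finset.mem_image, Finset.mem_subtype]
      constructor
      · rintro ⟨a, ha, rfl⟩; exact ha
      · intro hu
        exact ⟨⟨u, Finset.mem_coe.mpr (hBR hu)⟩, hu, rfl⟩
    have hyB := hy B'
    rw [himg] at hyB
    -- pre B = S₀.image fst
    have hfilter : P.filter (fun p => p.2 ∈ B) = S₀ := by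
      apply Finset.ext
      intro p
      simp only [Finset.mem_filter]
      constructor
      · rintro ⟨hpP, hpB⟩
        obtain ⟨q, hq, hq2⟩ := Finset.mem_image.mp hpB
        have := pIso_snd_inj DU hP hpP (hS₀P hq) hq2.symm
        rwa [this]
      · intro hp
        exact ⟨hS₀P hp, Finset.mem_image_of_mem _ hp⟩
    have hpreB : pre B = S₀.image Prod.fst := by rw [hpre]; simp only; rw [hfilter]
    rw [hf] at hyB
    simp only at hyB
    rw [himg, hpreB] at hyB
    rw [hyB]
  · -- S ⊆ P
    have : S ⊆ P := by
      intro p hp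
      rcases Finset.mem_insert.mp (hS hp) with rfl | h
      · exact absurd hp hxy
      · exact h
    exact hP S this



lemma eq_of_abs_le_mul {X Y M : ℝ} (hM : 0 ≤ M)
    (h : ∀ ε : ℝ, 0 < ε → |X - Y| ≤ M * ε) : X = Y := by
  by_contra hne
  have ht : 0 < |X - Y| := abs_pos.mpr (sub_ne_zero.mpr hne)
  rcases eq_or_lt_of_le hM with hM0 | hM0
  · have h1 := h 1 one_pos
    rw [← hM0, zero_mul] at h1
    linarith
  · have h1 := h (|X - Y| / (2 * M)) (by positivity)
    have h2 : M * (|X - Y| / (2 * M)) = |X - Y| / 2 := by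
      field_simp
    rw [h2] at h1
    linarith

end Stmt16Aux

open Stmt16Aux

set_option maxHeartbeats 8000000

/-- Every Polish diversity with the extension property is ultrahomogeneous. -/
theorem stmt16 {U : Type*} (DU : Diversity U)
    (hs : DU.SeparableD) (hc : DU.CompleteD) (he : DU.ExtensionProp) :
    DU.Ultrahomogeneous := by
  classical
  intro A A' φ hbij hiso
  rcases isEmpty_or_nonempty U with hU | hU
  · refine ⟨id, Function.bijective_id, fun C => by simp [Finset.eq_empty_of_isEmpty C], fun a => hU.elim ↑a⟩
  obtain ⟨s, hsc, hsd⟩ := hs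
  have hsne : s.Nonempty := by
    obtain ⟨x⟩ := hU
    obtain ⟨y, hy, -⟩ := hsd x 1 one_pos
    exact ⟨y, hy⟩
  obtain ⟨u, hu⟩ := Set.Countable.exists_eq_range hsc hsne
  have hdense : ∀ x : U, ∀ ε : ℝ, 0 < ε → ∃ n : ℕ, DU.δ {x, u n} < ε := by
    intro x ε hε
    obtain ⟨y, hy, hlt⟩ := hsd x ε hε
    rw [hu] at hy
    obtain ⟨n, rfl⟩ := hy
    exact ⟨n, hlt⟩
  -- the initial partial isomorphism, as a function
  set h0 : U → U := fun v => if hv : v ∈ A then (φ ⟨v, Finset.mem_coe.mpr hv⟩ : U) else v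
    with hh0
  have hφ' : ∀ B : Finset U, B ⊆ A → DU.δ (B.image h0) = DU.δ B := by
    intro B hB
    set B' : Finset ((A : Set U)) := B.subtype (fun v => v ∈ (A : Set U)) with hB'
    have h1 : B'.image Subtype.val = B := by
      ext v
      simp only [hB', Finset.mem_image, Finset.mem_subtype]
      exact ⟨fun ⟨a, ha, hav⟩ => hav ▸ ha, fun hv => ⟨⟨v, Finset.mem_coe.mpr (hB hv)⟩, hv, rfl⟩⟩
    have h2 : B'.image (fun b => (φ b : U)) = B.image h0 := by
      ext v
      simp only [hB', Finset.mem_image, Finset.mem_subtype]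
      constructor
      · rintro ⟨a, ha, rfl⟩
        refine ⟨(a : U), ha, ?_⟩
        have hmA : ((a : U) ∈ A) := Finset.mem_coe.mp a.2
        simp only [hh0]
        rw [dif_pos hmA]
      · rintro ⟨w, hw, rfl⟩
        refine ⟨⟨w, Finset.mem_coe.mpr (hB hw)⟩, hw, ?_⟩
        simp only [hh0]
        rw [dif_pos (hB hw)]
    calc DU.δ (B.image h0) = DU.δ (B'.image (fun b => (φ b : U))) := by rw [h2]
      _ = DU.δ (B'.image Subtype.val) := hiso B'
      _ = DU.δ B := by rw [h1]
  set P0 := A.image (fun a => (a, h0 a)) with hP0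
  have hP0iso : IsPIso DU P0 := graph_pIso DU A h0 hφ'
  -- forward extension choice function
  have Hext : ∀ (P : Finset (U × U)) (x : U), ∃ y,
      IsPIso DU P → IsPIso DU (insert (x, y) P) := by
    intro P x
    by_cases hP : IsPIso DU P
    · obtain ⟨y, hy⟩ := extend DU he hP x
      exact ⟨y, fun _ => hy⟩
    · exact ⟨x, fun h => absurd h hP⟩
  choose fwd hfwd using Hext
  set step : Finset (U × U) → U → Finset (U × U) := fun P x => insert (x, fwd P x) P
    with hstep
  set bstep : Finset (U × U) → U → Finset (U × U) := fun P x =>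
    (step (P.image Prod.swap) x).image Prod.swap with hbstep
  have hstep_iso : ∀ P x, IsPIso DU P → IsPIso DU (step P x) := fun P x hP => hfwd P x hP
  have hstep_sub : ∀ P x, P ⊆ step P x := fun P x => Finset.subset_insert _ _
  have hbstep_iso : ∀ P x, IsPIso DU P → IsPIso DU (bstep P x) := by
    intro P x hP
    exact pIso_swap DU (hstep_iso _ _ (pIso_swap DU hP))
  have hbstep_sub : ∀ P x, P ⊆ bstep P x := by
    intro P x p hp
    have h1 : Prod.swap p ∈ step (P.image Prod.swap) x :=
      hstep_sub _ _ (Finset.mem_image_of_mem _ hp)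
    have h2 := Finset.mem_image_of_mem Prod.swap h1
    rw [Prod.swap_swap] at h2
    exact h2
  set Pn : ℕ → Finset (U × U) := fun n =>
    Nat.rec P0 (fun k Q => bstep (step Q (u k)) (u k)) n with hPnd
  have hPn_succ : ∀ n, Pn (n + 1) = bstep (step (Pn n) (u n)) (u n) := fun n => rfl
  have hPn_zero : Pn 0 = P0 := rfl
  have hPn_iso : ∀ n, IsPIso DU (Pn n) := by
    intro n
    induction n with
    | zero => exact hP0iso
    | succ k ih => rw [hPn_succ]; exact hbstep_iso _ _ (hstep_iso _ _ ih)
  have hPn_mono : ∀ m n, m ≤ n → Pn m ⊆ Pn n := by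
    intro m n hmn
    induction n with
    | zero => rw [Nat.le_zero.mp hmn]
    | succ k ih =>
      rcases Nat.lt_or_ge m (k + 1) with hlt | hge
      · have h1 := ih (Nat.lt_succ_iff.mp hlt)
        rw [hPn_succ]
        exact h1.trans ((hstep_sub _ _).trans (hbstep_sub _ _))
      · rw [Nat.le_antisymm hmn hge]
  have hPn_fwd : ∀ n, ∃ y, (u n, y) ∈ Pn (n + 1) := by
    intro n
    refine ⟨fwd (Pn n) (u n), ?_⟩
    rw [hPn_succ]
    exact hbstep_sub _ _ (Finset.mem_insert_self _ _)
  have hPn_bwd : ∀ n, ∃ z, (z, u n) ∈ Pn (n + 1) := by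
    intro n
    rw [hPn_succ]
    refine ⟨fwd ((step (Pn n) (u n)).image Prod.swap) (u n), ?_⟩
    exact Finset.mem_image_of_mem Prod.swap (Finset.mem_insert_self _ _)
  set G : Set (U × U) := {p | ∃ n, p ∈ Pn n} with hG
  have hPnG : ∀ n, ∀ p ∈ Pn n, p ∈ G := fun n p hp => ⟨n, hp⟩
  have hfin : ∀ T : Finset (U × U), (∀ p ∈ T, p ∈ G) → ∃ n, ∀ p ∈ T, p ∈ Pn n := by
    intro T hT
    induction T using Finset.induction with
    | empty => exact ⟨0, by simp⟩
    | insert q T ha ih =>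
      obtain ⟨n, hn⟩ := ih (fun p hp => hT p (Finset.mem_insert_of_mem hp))
      obtain ⟨m, hm⟩ := hT q (Finset.mem_insert_self _ _)
      refine ⟨max m n, fun p hp => ?_⟩
      rcases Finset.mem_insert.mp hp with rfl | hp
      · exact hPn_mono m _ (le_max_left _ _) hm
      · exact hPn_mono n _ (le_max_right _ _) (hn p hp)
  have hTδ : ∀ T : Finset (U × U), (∀ p ∈ T, p ∈ G) →
      DU.δ (T.image Prod.fst) = DU.δ (T.image Prod.snd) := by
    intro T hT
    obtain ⟨n, hn⟩ := hfin T hT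
    exact hPn_iso n T hn
  have hpair : ∀ a b a' b' : U, (a, b) ∈ G → (a', b') ∈ G →
      DU.δ {a, a'} = DU.δ {b, b'} := by
    intro a b a' b' h1 h2
    have h3 := hTδ {(a, b), (a', b')} (by
      intro p hp
      rcases Finset.mem_insert.mp hp with rfl | hp
      · exact h1
      · rw [Finset.mem_singleton.mp hp]; exact h2)
    simpa using h3
  -- choice functions selecting images / preimages along G
  have hGfun : ∀ v : U, ∃ w, (∃ w', (v, w') ∈ G) → (v, w) ∈ G := by
    intro v
    by_cases h : ∃ w', (v, w') ∈ G
    · exact ⟨h.choose, fun _ => h.choose_spec⟩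
    · exact ⟨v, fun hh => absurd hh h⟩
  choose g hg using hGfun
  have hGfun' : ∀ w : U, ∃ v, (∃ v', (v', w) ∈ G) → (v, w) ∈ G := by
    intro w
    by_cases h : ∃ v', (v', w) ∈ G
    · exact ⟨h.choose, fun _ => h.choose_spec⟩
    · exact ⟨w, fun hh => absurd hh h⟩
  choose g' hg' using hGfun'
  have hdom : ∀ x : U, ∀ ε : ℝ, 0 < ε → ∃ v, (v, g v) ∈ G ∧ DU.δ {x, v} < ε := by
    intro x ε hε
    obtain ⟨n, hn⟩ := hdense x ε hε
    obtain ⟨y, hy⟩ := hPn_fwd n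
    exact ⟨u n, hg (u n) ⟨y, hPnG (n + 1) _ hy⟩, hn⟩
  have hran : ∀ y : U, ∀ ε : ℝ, 0 < ε → ∃ w, (g' w, w) ∈ G ∧ DU.δ {y, w} < ε := by
    intro y ε hε
    obtain ⟨n, hn⟩ := hdense y ε hε
    obtain ⟨z, hz⟩ := hPn_bwd n
    exact ⟨u n, hg' (u n) ⟨z, hPnG (n + 1) _ hz⟩, hn⟩
  have heps : ∀ ε : ℝ, 0 < ε → ∃ K : ℕ, ∀ n ≥ K, (1 : ℝ) / (n + 1) < ε := by
    intro ε hε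
    obtain ⟨K, hK⟩ := exists_nat_one_div_lt hε
    refine ⟨K, fun n hn => lt_of_le_of_lt ?_ hK⟩
    apply one_div_le_one_div_of_le
    · positivity
    · have : (K : ℝ) ≤ (n : ℝ) := Nat.cast_le.mpr hn
      linarith
  -- the limit map
  have hLim : ∀ x : U, ∃ y : U, ∀ ε : ℝ, 0 < ε →
      ∃ v, (v, g v) ∈ G ∧ DU.δ {x, v} < ε ∧ DU.δ {g v, y} < ε := by
    intro x
    have hseq : ∀ k : ℕ, ∃ v, (v, g v) ∈ G ∧ DU.δ {x, v} < 1 / (k + 1) := by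
      intro k
      exact hdom x _ (by positivity)
    choose v hvG hvx using hseq
    have hcauchy : ∀ ε : ℝ, 0 < ε → ∃ N, ∀ m ≥ N, ∀ n ≥ N,
        DU.δ {g (v m), g (v n)} < ε := by
      intro ε hε
      obtain ⟨K, hK⟩ := heps (ε / 2) (by positivity)
      refine ⟨K, fun m hm n hn => ?_⟩
      have h1 : DU.δ {g (v m), g (v n)} = DU.δ {v m, v n} :=
        (hpair _ _ _ _ (hvG m) (hvG n)).symm
      have h2 : DU.δ {v m, x} < ε / 2 := by
        rw [d_comm]
        exact lt_trans (hvx m) (hK m hm)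
      have h3 : DU.δ {x, v n} < ε / 2 := lt_trans (hvx n) (hK n hn)
      have h4 := d_triangle DU (v m) x (v n)
      rw [h1]
      linarith
    obtain ⟨y, hy⟩ := hc (fun k => g (v k)) hcauchy
    refine ⟨y, fun ε hε => ?_⟩
    obtain ⟨N, hN⟩ := hy ε hε
    obtain ⟨K, hK⟩ := heps ε hε
    refine ⟨v (max N K), hvG _, ?_, ?_⟩
    · exact lt_trans (hvx _) (hK _ (le_max_right _ _))
    · exact hN _ (le_max_left _ _)
  choose Φ hΦ using hLim
  -- Φ preserves the diversity of all finite sets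
  have hpres : ∀ C : Finset U, DU.δ (C.image Φ) = DU.δ C := by
    intro C
    have key : ∀ ε : ℝ, 0 < ε →
        |DU.δ (C.image Φ) - DU.δ C| ≤ 2 * C.card * ε := by
      intro ε hε
      have hch := fun c : U => hΦ c ε hε
      choose v hvG hvx hvy using hch
      have l1 : |DU.δ (C.image Φ) - DU.δ (C.image (fun c => g (v c)))| ≤ C.card * ε := by
        refine le_trans (lip' DU C Φ (fun c => g (v c))) ?_
        have hb : ∀ c ∈ C, DU.δ {Φ c, g (v c)} ≤ ε := by
          intro c _
          rw [d_comm]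
          exact le_of_lt (hvy c)
        calc ∑ c ∈ C, DU.δ {Φ c, g (v c)} ≤ C.card • ε := Finset.sum_le_card_nsmul _ _ _ hb
          _ = C.card * ε := nsmul_eq_mul _ _
      have l2 : DU.δ (C.image (fun c => g (v c))) = DU.δ (C.image v) := by
        have hsub : ∀ p ∈ C.image (fun c => (v c, g (v c))), p ∈ G := by
          intro p hp
          obtain ⟨c, _, rfl⟩ := Finset.mem_image.mp hp
          exact hvG c
        have h3 := hTδ _ hsub
        rw [Finset.image_image, Finset.image_image] at h3
        exact h3.symm
      have l3 : |DU.δ (C.image v) - DU.δ C| ≤ C.card * ε := by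
        have h4 := lip' DU C v id
        rw [Finset.image_id] at h4
        refine le_trans h4 ?_
        have hb : ∀ c ∈ C, DU.δ {v c, id c} ≤ ε := by
          intro c _
          rw [d_comm]
          exact le_of_lt (hvx c)
        calc ∑ c ∈ C, DU.δ {v c, id c} ≤ C.card • ε := Finset.sum_le_card_nsmul _ _ _ hb
          _ = C.card * ε := nsmul_eq_mul _ _
      have habs := abs_sub_le (DU.δ (C.image Φ)) (DU.δ (C.image (fun c => g (v c)))) (DU.δ C)
      rw [l2] at l1
      calc |DU.δ (C.image Φ) - DU.δ C|
          ≤ |DU.δ (C.image Φ) - DU.δ (C.image (fun c => g (v c)))| +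
            |DU.δ (C.image (fun c => g (v c))) - DU.δ C| := habs
        _ ≤ C.card * ε + C.card * ε := by
            rw [l2]
            exact add_le_add l1 l3
        _ = 2 * C.card * ε := by ring
    have hM : (0 : ℝ) ≤ 2 * C.card := mul_nonneg (by norm_num) (Nat.cast_nonneg _)
    exact eq_of_abs_le_mul hM key
  -- injectivity
  have hinj : Function.Injective Φ := by
    intro x x' hxx
    have h1 := hpres {x, x'}
    rw [Finset.image_insert, Finset.image_singleton, hxx] at h1
    have h2 : DU.δ {x, x'} = 0 := by
      rw [← h1]
      simpa using delta_single DU (Φ x')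
    exact d_eq_of_zero DU h2
  -- surjectivity
  have hsurj : Function.Surjective Φ := by
    intro y
    have hseq : ∀ k : ℕ, ∃ w, (g' w, w) ∈ G ∧ DU.δ {y, w} < 1 / (k + 1) := by
      intro k
      exact hran y _ (by positivity)
    choose w hwG hwy using hseq
    have hcauchy : ∀ ε : ℝ, 0 < ε → ∃ N, ∀ m ≥ N, ∀ n ≥ N,
        DU.δ {g' (w m), g' (w n)} < ε := by
      intro ε hε
      obtain ⟨K, hK⟩ := heps (ε / 2) (by positivity)
      refine ⟨K, fun m hm n hn => ?_⟩
      have h1 : DU.δ {g' (w m), g' (w n)} = DU.δ {w m, w n} :=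
        hpair _ _ _ _ (hwG m) (hwG n)
      have h2 : DU.δ {w m, y} < ε / 2 := by
        rw [d_comm]
        exact lt_trans (hwy m) (hK m hm)
      have h3 : DU.δ {y, w n} < ε / 2 := lt_trans (hwy n) (hK n hn)
      have h4 := d_triangle DU (w m) y (w n)
      rw [h1]
      linarith
    obtain ⟨x, hx⟩ := hc (fun k => g' (w k)) hcauchy
    refine ⟨x, ?_⟩
    have hzero : ∀ ε : ℝ, 0 < ε → DU.δ {Φ x, y} < 4 * ε := by
      intro ε hε
      obtain ⟨v, hvG, hvx, hvΦ⟩ := hΦ x ε hε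
      obtain ⟨N, hN⟩ := hx ε hε
      obtain ⟨K, hK⟩ := heps ε hε
      set n := max N K with hn
      have h1 : DU.δ {g v, w n} = DU.δ {v, g' (w n)} :=
        (hpair _ _ _ _ hvG (hwG n)).symm
      have t1 := d_triangle DU (Φ x) (g v) y
      have t2 := d_triangle DU (g v) (w n) y
      have t3 := d_triangle DU v x (g' (w n))
      have b1 : DU.δ {Φ x, g v} < ε := by rw [d_comm]; exact hvΦ
      have b2 : DU.δ {w n, y} < ε := by
        rw [d_comm]
        exact lt_trans (hwy n) (hK n (le_max_right _ _))
      have b3 : DU.δ {v, x} < ε := by rw [d_comm]; exact hvx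
      have b4 : DU.δ {x, g' (w n)} < ε := by
        rw [d_comm]
        exact hN n (le_max_left _ _)
      linarith
    have hz : DU.δ {Φ x, y} = 0 := by
      by_contra h
      have hp2 : 0 < DU.δ {Φ x, y} := lt_of_le_of_ne (DU.nonneg _) (Ne.symm h)
      have := hzero (DU.δ {Φ x, y} / 8) (by positivity)
      linarith
    exact d_eq_of_zero DU hz
  -- agreement with φ
  have hagree : ∀ a : ((A : Set U)), Φ a = (φ a : U) := by
    intro a
    have haA : (a : U) ∈ A := Finset.mem_coe.mp a.2
    have hmem : ((a : U), h0 (a : U)) ∈ G :=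
      hPnG 0 _ (by rw [hPn_zero, hP0]; exact Finset.mem_image_of_mem _ haA)
    have hzero : ∀ ε : ℝ, 0 < ε → DU.δ {Φ (a : U), h0 (a : U)} < 2 * ε := by
      intro ε hε
      obtain ⟨v, hvG, hvx, hvΦ⟩ := hΦ (a : U) ε hε
      have h1 : DU.δ {g v, h0 (a : U)} = DU.δ {v, (a : U)} :=
        (hpair _ _ _ _ hvG hmem).symm
      have t1 := d_triangle DU (Φ (a : U)) (g v) (h0 (a : U))
      have b1 : DU.δ {Φ (a : U), g v} < ε := by rw [d_comm]; exact hvΦ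
      have b2 : DU.δ {v, (a : U)} < ε := by rw [d_comm]; exact hvx
      linarith
    have hz : DU.δ {Φ (a : U), h0 (a : U)} = 0 := by
      by_contra h
      have hp2 : 0 < DU.δ {Φ (a : U), h0 (a : U)} := lt_of_le_of_ne (DU.nonneg _) (Ne.symm h)
      have := hzero (DU.δ {Φ (a : U), h0 (a : U)} / 4) (by positivity)
      linarith
    have heq : Φ (a : U) = h0 (a : U) := d_eq_of_zero DU hz
    rw [heq]
    simp only [hh0]
    rw [dif_pos haA]
  exact ⟨Φ, ⟨hinj, hsurj⟩, hpres, hagree⟩
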